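/- arXiv:2003.03082 — 2 statements merged into one kernel-verified Lean document; each statement's English description precedes it below -/
import Mathlib

section
/- Let ε be a primitive cube root of unity and L = Q(ε, ∛5). The norm equation N_{L/Q(ε)}(a) = 17 has a solution a ∈ L. -/
open Polynomial

lemma not_cube_rat : ∀ q : ℚ, q ^ 3 ≠ 5 := by
  intro q hq
  rcases em (∃ y : ℤ, (q : ℝ) = y) with ⟨y, hy⟩ | h
  · have hy3 : (y : ℝ) ^ 3 = 5 := by rw [← hy]; exact_mod_cast hq
    have h5 : y ^ 3 = 5 := by exact_mod_cast hy3
    rcases le_or_gt y 1 with h1 | h2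
    · nlinarith [sq_nonneg y, sq_nonneg (y - 1), sq_nonneg (y + 1)]
    · nlinarith [sq_nonneg y, sq_nonneg (y - 1), sq_nonneg (y + 1)]
  · have : Irrational (q : ℝ) :=
      irrational_nrt_of_notint_nrt 3 5 (by exact_mod_cast hq) h (by norm_num)
    exact this.ne_rat q rfl

lemma cube_monic (F : Type*) [Field F] : (X ^ 3 - C (5 : F)).Monic :=
  (monic_X_pow 3).sub_of_left (by
    refine degree_C_le.trans_lt ?_
    rw [degree_X_pow]; norm_num)

lemma cube_natDegree (F : Type*) [Field F] : (X ^ 3 - C (5 : F)).natDegree = 3 := by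
  compute_degree!

lemma not_cube_K (K : Type) [Field K] [Algebra ℚ K] [IsCyclotomicExtension {3} ℚ K] :
    ∀ c : K, c ^ 3 ≠ 5 := by
  have hfin : Module.finrank ℚ K = 2 := by
    have := IsCyclotomicExtension.finrank (n := 3) K
      (cyclotomic.irreducible_rat (by norm_num))
    simpa [Nat.totient_prime Nat.prime_three] using this
  intro c hc
  have hirr : Irreducible (X ^ 3 - C (5 : ℚ)) :=
    X_pow_sub_C_irreducible_of_prime Nat.prime_three not_cube_rat
  have haev : Polynomial.aeval c (X ^ 3 - C (5 : ℚ)) = 0 := by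
    simp [hc]
  have hint : IsIntegral ℚ c := ⟨X ^ 3 - C (5 : ℚ), cube_monic ℚ, by simpa using haev⟩
  have hmin : minpoly ℚ c = X ^ 3 - C (5 : ℚ) :=
    (minpoly.eq_of_irreducible_of_monic hirr haev (cube_monic ℚ)).symm
  have hdvd := minpoly.degree_dvd hint
  rw [hmin, hfin, cube_natDegree ℚ] at hdvd
  omega

/-- Let `ε` be a primitive cube root of unity, `K = ℚ(ε)`, and `L = ℚ(ε, ∛5) = K(∛5)`. Then the
norm equation `N_{L/K}(a) = 17` has a solution `a ∈ L`. -/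
theorem norm_equation_seventeen_solvable (K : Type) [Field K] [Algebra ℚ K]
    [IsCyclotomicExtension {3} ℚ K] (ε : K) (hε : IsPrimitiveRoot ε 3)
    (L : Type) [Field L] [Algebra K L] [FiniteDimensional K L]
    (r : L) (hr : r ^ 3 = 5) (hgen : Algebra.adjoin K {r} = ⊤) :
    ∃ a : L, Algebra.norm K a = 17 := by
  have hrint : IsIntegral K r := IsIntegral.of_finite K r
  have hirrK : Irreducible (X ^ 3 - C (5 : K)) :=
    X_pow_sub_C_irreducible_of_prime Nat.prime_three (not_cube_K K)
  have h5L : algebraMap K L 5 = 5 := map_ofNat _ 5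
  have haevr : Polynomial.aeval r (X ^ 3 - C (5 : K)) = 0 := by
    simp [hr, h5L]
  have hminr : minpoly K r = X ^ 3 - C (5 : K) :=
    (minpoly.eq_of_irreducible_of_monic hirrK haevr (cube_monic K)).symm
  -- power basis with generator r
  let pb0 : PowerBasis K L :=
    (Algebra.adjoin.powerBasis hrint).map
      ((Subalgebra.equivOfEq _ _ hgen).trans Subalgebra.topEquiv)
  have hpb0gen : pb0.gen = r := by
    simp [pb0, Algebra.adjoin.powerBasis_gen]
  have hfinrank : Module.finrank K L = 3 := by
    rw [pb0.finrank, ← pb0.natDegree_minpoly, hpb0gen, hminr, cube_natDegree K]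
  -- the element a := r^2 - 2
  set a : L := r ^ 2 - 2 with ha
  have haint : IsIntegral K a := IsIntegral.of_finite K a
  have hsq : (a + 2) ^ 2 = 5 * r := by
    have h1 : (a + 2) ^ 2 = r ^ 3 * r := by rw [ha]; ring
    rw [h1, hr]
  have hr_mem : r ∈ Algebra.adjoin K ({a} : Set L) := by
    have hmem : a ∈ Algebra.adjoin K ({a} : Set L) := Algebra.self_mem_adjoin_singleton K a
    have h2mem : (2 : L) ∈ Algebra.adjoin K ({a} : Set L) := by
      rw [show (2 : L) = algebraMap K L 2 from (map_ofNat _ 2).symm]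
      exact Subalgebra.algebraMap_mem _ 2
    have h : r = (5 : K)⁻¹ • (a + 2) ^ 2 := by
      haveI : CharZero K := charZero_of_injective_algebraMap (algebraMap ℚ K).injective
      haveI : CharZero L := charZero_of_injective_algebraMap (algebraMap K L).injective
      rw [hsq, Algebra.smul_def, map_inv₀, h5L, inv_mul_cancel_left₀ (by norm_num)]
    rw [h]
    exact Subalgebra.smul_mem _ (pow_mem (add_mem hmem h2mem) 2) _
  let pb : PowerBasis K L := PowerBasis.ofAdjoinEqTop haint (pb0.adjoin_eq_top_of_gen_mem_adjoin (hpb0gen ▸ hr_mem))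
  have hpbgen : pb.gen = a := by simp [pb]
  have hdegmina : (minpoly K a).natDegree = 3 := by
    rw [← hpbgen, pb.natDegree_minpoly, ← pb.finrank, hfinrank]
  set p : K[X] := (X + C 2) ^ 3 - C 25 with hp
  have hdegcube : (((X : K[X]) + C 2) ^ 3).degree = 3 := by
    rw [degree_pow, degree_X_add_C]; rfl
  have hCdeg0 : (C (25 : K)).degree < (((X : K[X]) + C 2) ^ 3).degree := by
    refine degree_C_le.trans_lt ?_; rw [hdegcube]; norm_num
  have hpmonic : p.Monic := ((monic_X_add_C (2 : K)).pow 3).sub_of_left hCdeg0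
  have hCdeg : (C (25 : K)).degree < (((X : K[X]) + C 2) ^ 3).degree := by
    refine degree_C_le.trans_lt ?_; rw [hdegcube]; norm_num
  have hpdeg : p.natDegree = 3 := by
    have hd : p.degree = 3 := by
      rw [hp, degree_sub_eq_left_of_degree_lt hCdeg, hdegcube]
    exact natDegree_eq_of_degree_eq_some hd
  have haevp : Polynomial.aeval a p = 0 := by
    rw [hp]
    simp only [map_sub, map_pow, map_add, aeval_X, aeval_C]
    rw [map_ofNat, map_ofNat]
    have h1 : (a + 2) ^ 3 = ((a + 2) ^ 2) * (a + 2) := by ring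
    rw [h1, hsq, ha]
    have h2 : (5 : L) * r * (r ^ 2 - 2 + 2) = 5 * r ^ 3 := by ring
    rw [h2, hr]; norm_num
  have hmina : minpoly K a = p := by
    obtain ⟨c, hc⟩ := minpoly.dvd K a haevp
    have hcmonic : c.Monic := (minpoly.monic haint).of_mul_monic_left (hc ▸ hpmonic)
    have hcdeg : c.natDegree = 0 := by
      have h := congrArg natDegree hc
      rw [hpdeg, natDegree_mul (minpoly.ne_zero haint) hcmonic.ne_zero, hdegmina] at h
      omega
    rw [hc, hcmonic.natDegree_eq_zero.mp hcdeg, mul_one]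
  refine ⟨a, ?_⟩
  have hnorm := Algebra.PowerBasis.norm_gen_eq_coeff_zero_minpoly pb
  rw [hpbgen, ← pb.natDegree_minpoly, hpbgen, hmina, hpdeg] at hnorm
  have hc0 : p.coeff 0 = -17 := by
    rw [coeff_zero_eq_eval_zero, hp]
    simp
    norm_num
  rw [hnorm, hc0]
  norm_num
end

section
/- Let ε be a primitive cube root of unity and L = Q(ε, ∛5). The norm equation N_{L/Q(ε)}(a) = 19 has no solution a ∈ L. -/
open Polynomial

set_option maxHeartbeats 1000000

instance f19p : Fact (Nat.Prime 19) := ⟨by norm_num⟩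


lemma f19 : ∀ u v w : ZMod 19, u^3 + 5*v^3 + 25*w^3 - 15*(u*v*w) = 0 → u = 0 ∧ v = 0 ∧ w = 0 := by
  decide

lemma toZMod_eq_zero_iff (x : ℤ_[19]) : PadicInt.toZMod x = 0 ↔ ‖x‖ < 1 := by
  rw [← RingHom.mem_ker, PadicInt.ker_toZMod, PadicInt.maximalIdeal_eq_span_p,
    Ideal.mem_span_singleton, ← PadicInt.norm_lt_one_iff_dvd]

lemma int_form_norm (x y z : ℤ_[19]) (h : ¬(‖x‖ < 1 ∧ ‖y‖ < 1 ∧ ‖z‖ < 1)) :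
    ‖x^3 + 5*y^3 + 25*z^3 - 15*(x*y*z)‖ = 1 := by
  set s := x^3 + 5*y^3 + 25*z^3 - 15*(x*y*z) with hs
  have h1 : PadicInt.toZMod s ≠ 0 := by
    intro h0
    have h2 : (PadicInt.toZMod x)^3 + 5*(PadicInt.toZMod y)^3 + 25*(PadicInt.toZMod z)^3
        - 15*(PadicInt.toZMod x * PadicInt.toZMod y * PadicInt.toZMod z) = 0 := by
      rw [← h0, hs]
      simp only [map_sub, map_add, map_mul, map_pow, map_ofNat]
    obtain ⟨hx, hy, hz⟩ := f19 _ _ _ h2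
    rw [toZMod_eq_zero_iff] at hx hy hz
    exact h ⟨hx, hy, hz⟩
  have h3 : ¬ ‖s‖ < 1 := by rw [← toZMod_eq_zero_iff]; exact h1
  exact le_antisymm (PadicInt.norm_le_one s) (not_lt.mp h3)

lemma local19 (x y z : ℚ_[19]) : x^3 + 5*y^3 + 25*z^3 - 15*(x*y*z) ≠ 19 := by
  intro h
  have hne : ¬(x = 0 ∧ y = 0 ∧ z = 0) := by
    rintro ⟨rfl, rfl, rfl⟩
    norm_num at h
  set M := max ‖x‖ (max ‖y‖ ‖z‖) with hMdef
  have hxM : ‖x‖ ≤ M := le_max_left _ _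
  have hyM : ‖y‖ ≤ M := le_trans (le_max_left _ _) (le_max_right _ _)
  have hzM : ‖z‖ ≤ M := le_trans (le_max_right _ _) (le_max_right _ _)
  have hM0 : 0 < M := by
    rcases not_and_or.mp hne with hx | h'
    · exact lt_of_lt_of_le (norm_pos_iff.mpr hx) hxM
    rcases not_and_or.mp h' with hy | hz
    · exact lt_of_lt_of_le (norm_pos_iff.mpr hy) hyM
    · exact lt_of_lt_of_le (norm_pos_iff.mpr hz) hzM
  obtain ⟨t, ht⟩ : ∃ t : ℤ, M = (19:ℝ)^t := by
    have hMm : M = ‖x‖ ∨ M = ‖y‖ ∨ M = ‖z‖ := by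
      rcases max_cases ‖x‖ (max ‖y‖ ‖z‖) with ⟨h1, _⟩ | ⟨h1, _⟩
      · exact Or.inl h1
      · rcases max_cases ‖y‖ ‖z‖ with ⟨h2, _⟩ | ⟨h2, _⟩
        · exact Or.inr (Or.inl (h1.trans h2))
        · exact Or.inr (Or.inr (h1.trans h2))
    rcases hMm with hm | hm | hm <;>
      [ (have hne0 : x ≠ 0 := by intro h0; rw [h0, norm_zero] at hm; exact absurd hm hM0.ne');
        (have hne0 : y ≠ 0 := by intro h0; rw [h0, norm_zero] at hm; exact absurd hm hM0.ne');
        (have hne0 : z ≠ 0 := by intro h0; rw [h0, norm_zero] at hm; exact absurd hm hM0.ne')] <;>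
      [ exact ⟨-x.valuation, by rw [hm, Padic.norm_eq_zpow_neg_valuation hne0]; norm_num⟩;
        exact ⟨-y.valuation, by rw [hm, Padic.norm_eq_zpow_neg_valuation hne0]; norm_num⟩;
        exact ⟨-z.valuation, by rw [hm, Padic.norm_eq_zpow_neg_valuation hne0]; norm_num⟩]
  set c : ℚ_[19] := (19:ℚ_[19])^t with hcdef
  have hcnorm : ‖c‖ = (19:ℝ)^(-t) := Padic.norm_p_zpow t
  have hct : (19:ℝ)^(-t) * (19:ℝ)^t = 1 := by
    rw [← zpow_add₀ (by norm_num : (19:ℝ) ≠ 0)]; norm_num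
  have hle : ∀ w : ℚ_[19], ‖w‖ ≤ M → ‖c * w‖ ≤ 1 := by
    intro w hw
    rw [norm_mul, hcnorm]
    calc (19:ℝ)^(-t) * ‖w‖ ≤ (19:ℝ)^(-t) * (19:ℝ)^t := by
          apply mul_le_mul_of_nonneg_left (hw.trans_eq ht) (zpow_nonneg (by norm_num) _)
      _ = 1 := hct
  set U : ℤ_[19] := ⟨c * x, hle x hxM⟩ with hU
  set V : ℤ_[19] := ⟨c * y, hle y hyM⟩ with hV
  set W : ℤ_[19] := ⟨c * z, hle z hzM⟩ with hW
  have hUn : ‖U‖ = (19:ℝ)^(-t) * ‖x‖ := by rw [PadicInt.norm_def]; simp only [hU]; rw [norm_mul, hcnorm]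
  have hVn : ‖V‖ = (19:ℝ)^(-t) * ‖y‖ := by rw [PadicInt.norm_def]; simp only [hV]; rw [norm_mul, hcnorm]
  have hWn : ‖W‖ = (19:ℝ)^(-t) * ‖z‖ := by rw [PadicInt.norm_def]; simp only [hW]; rw [norm_mul, hcnorm]
  have hbig : ¬(‖U‖ < 1 ∧ ‖V‖ < 1 ∧ ‖W‖ < 1) := by
    rintro ⟨h1, h2, h3⟩
    rw [hUn] at h1; rw [hVn] at h2; rw [hWn] at h3
    have hmax : (19:ℝ)^(-t) * M < 1 := by
      rw [hMdef, mul_max_of_nonneg _ _ (zpow_nonneg (by norm_num) _),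
        mul_max_of_nonneg _ _ (zpow_nonneg (by norm_num) _)]
      exact max_lt h1 (max_lt h2 h3)
    rw [ht, hct] at hmax
    exact lt_irrefl _ hmax
  have hform := int_form_norm U V W hbig
  have hcoe : ((U^3 + 5*V^3 + 25*W^3 - 15*(U*V*W) : ℤ_[19]) : ℚ_[19])
      = c^3 * (x^3 + 5*y^3 + 25*z^3 - 15*(x*y*z)) := by
    have c5 : ((5:ℤ_[19]):ℚ_[19]) = 5 := by
      rw [show (5:ℤ_[19]) = ((5:ℕ):ℤ_[19]) by norm_num, PadicInt.coe_natCast]; norm_num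
    have c25 : ((25:ℤ_[19]):ℚ_[19]) = 25 := by
      rw [show (25:ℤ_[19]) = ((25:ℕ):ℤ_[19]) by norm_num, PadicInt.coe_natCast]; norm_num
    have c15 : ((15:ℤ_[19]):ℚ_[19]) = 15 := by
      rw [show (15:ℤ_[19]) = ((15:ℕ):ℤ_[19]) by norm_num, PadicInt.coe_natCast]; norm_num
    simp only [PadicInt.coe_sub, PadicInt.coe_add, PadicInt.coe_mul, PadicInt.coe_pow, c5, c25, c15]
    simp only [hU, hV, hW]
    ring
  have hn19 : ‖(19:ℚ_[19])‖ = (19:ℝ)⁻¹ := by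
    simpa using Padic.norm_p (p := 19)
  have hval : ‖U^3 + 5*V^3 + 25*W^3 - 15*(U*V*W)‖ = (19:ℝ)^(-(3*t+1)) := by
    rw [PadicInt.norm_def, hcoe, h, norm_mul, norm_pow, hcnorm, hn19,
      ← zpow_natCast ((19:ℝ)^(-t)) 3, ← zpow_mul,
      show ((19:ℝ))⁻¹ = (19:ℝ)^(-1:ℤ) by norm_num,
      ← zpow_add₀ (by norm_num : (19:ℝ) ≠ 0)]
    congr 1
    ring
  rw [hform] at hval
  have h2 : -(3*t+1) = 0 :=
    zpow_right_injective₀ (by norm_num : (0:ℝ) < 19) (by norm_num : (19:ℝ) ≠ 1)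
      (hval.symm.trans (zpow_zero _).symm)
  omega


lemma exists_zeta : ∃ y : ℚ_[19], y^2 + y + 1 = 0 := by
  have h : ‖(X^2 + X + 1 : Polynomial ℤ_[19]).eval 7‖
      < ‖(X^2 + X + 1 : Polynomial ℤ_[19]).derivative.eval 7‖^2 := by
    have he : (X^2 + X + 1 : Polynomial ℤ_[19]).eval 7 = 57 := by norm_num
    have hd : (X^2 + X + 1 : Polynomial ℤ_[19]).derivative.eval 7 = 15 := by
      simp [derivative_add, derivative_pow]
      norm_num
    rw [he, hd]
    have h57 : ‖(57:ℤ_[19])‖ < 1 := by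
      rw [show (57:ℤ_[19]) = ((57:ℤ):ℤ_[19]) by norm_num, PadicInt.norm_int_lt_one_iff_dvd]
      norm_num
    have h15 : ‖(15:ℤ_[19])‖ = 1 := by
      apply le_antisymm (PadicInt.norm_le_one _)
      by_contra hlt
      push_neg at hlt
      rw [show (15:ℤ_[19]) = ((15:ℤ):ℤ_[19]) by norm_num, PadicInt.norm_int_lt_one_iff_dvd] at hlt
      norm_num at hlt
    rw [h15]; simpa using h57
  obtain ⟨z, hz, -⟩ := hensels_lemma h
  refine ⟨(z : ℚ_[19]), ?_⟩
  have : ((z^2 + z + 1 : ℤ_[19]) : ℚ_[19]) = 0 := by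
    rw [show z^2+z+1 = (X^2+X+1 : Polynomial ℤ_[19]).aeval z by simp, hz]
    rfl
  push_cast at this
  convert this using 2

lemma exists_emb (K : Type) [Field K] [Algebra ℚ K]
    [IsCyclotomicExtension {3} ℚ K] (ε : K) (hε : IsPrimitiveRoot ε 3) :
    Nonempty (K →ₐ[ℚ] ℚ_[19]) := by
  haveI : CharZero K := charZero_of_injective_algebraMap (algebraMap ℚ K).injective
  have hε' : IsPrimitiveRoot ε ((3:ℕ+):ℕ) := by exact_mod_cast hε
  obtain ⟨y, hy⟩ := exists_zeta
  have hmin : minpoly ℚ ε = X^2 + X + 1 := by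
    have hc := Polynomial.cyclotomic_eq_minpoly_rat hε (by norm_num : 0 < 3)
    rw [Subsingleton.elim (DivisionRing.toRatAlgebra : Algebra ℚ K) ‹Algebra ℚ K›] at hc
    rw [← hc, Polynomial.cyclotomic_prime]
    simp [Finset.sum_range_succ]
    ring
  refine ⟨(hε.powerBasis ℚ).lift y ?_⟩
  rw [IsPrimitiveRoot.powerBasis_gen, hmin]
  simp only [map_add, map_pow, map_one, aeval_X]
  linear_combination hy


lemma no_rat_cube_25 (q : ℚ) : q^3 ≠ 25 := by
  intro h
  haveI : Fact (Nat.Prime 5) := ⟨by norm_num⟩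
  have hq : q ≠ 0 := by rintro rfl; norm_num at h
  have h1 := padicValRat.pow (p := 5) q (k := 3)
  rw [h] at h1
  have h2 : padicValRat 5 (25:ℚ) = 2 := by
    rw [show (25:ℚ) = ((5:ℕ):ℚ)^2 by norm_num,
      padicValRat.pow ((5:ℕ):ℚ),
      padicValRat.self (by norm_num : 1 < 5)]
    ring
  rw [h2] at h1
  omega

lemma no_cube5 (K : Type) [Field K] [Algebra ℚ K]
    [IsCyclotomicExtension {3} ℚ K] (s : K) : s^3 ≠ 5 := by
  intro h
  have hfr : Module.finrank ℚ K = 2 := by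
    have := IsCyclotomicExtension.finrank (n := 3) K
      (Polynomial.cyclotomic.irreducible_rat (by norm_num))
    simpa [Nat.totient_prime Nat.prime_three] using this
  have hN : (Algebra.norm ℚ s)^3 = 25 := by
    rw [← map_pow, h, show (5:K) = algebraMap ℚ K 5 by rw [map_ofNat],
      Algebra.norm_algebraMap, hfr]
    norm_num
  exact no_rat_cube_25 _ hN

/-- Let `ε` be a primitive cube root of unity, `K = ℚ(ε)`, and `L = ℚ(ε, ∛5) = K(∛5)`. Then the
norm equation `N_{L/K}(a) = 19` has no solution `a ∈ L`. -/
theorem norm_equation_nineteen_not_solvable (K : Type) [Field K] [Algebra ℚ K]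
    [IsCyclotomicExtension {3} ℚ K] (ε : K) (hε : IsPrimitiveRoot ε 3)
    (L : Type) [Field L] [Algebra K L] [FiniteDimensional K L]
    (r : L) (hr : r ^ 3 = 5) (hgen : Algebra.adjoin K {r} = ⊤) :
    ¬ ∃ a : L, Algebra.norm K a = 19 := by
  rintro ⟨a, hna⟩
  -- set up the power basis 1, r, r²
  have h5L : (5:L) = algebraMap K L 5 := by rw [map_ofNat]
  have hmonic : (X^3 - C (5:K)).Monic := Polynomial.monic_X_pow_sub_C _ (by norm_num)
  have haev : aeval r (X^3 - C (5:K)) = 0 := by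
    simp [hr, h5L, Algebra.algebraMap_eq_smul_one]
  have hint : IsIntegral K r := ⟨X^3 - C (5:K), hmonic, haev⟩
  have hirr : Irreducible (X^3 - C (5:K)) :=
    X_pow_sub_C_irreducible_of_prime (by norm_num) (fun b => no_cube5 K b)
  have hmin : minpoly K r = X^3 - C (5:K) :=
    (minpoly.eq_of_irreducible_of_monic hirr haev hmonic).symm
  set pb : PowerBasis K L :=
    (Algebra.adjoin.powerBasis hint).map
      ((Subalgebra.equivOfEq _ _ hgen).trans Subalgebra.topEquiv) with hpb
  have hgen' : pb.gen = r := by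
    simp [hpb, Algebra.adjoin.powerBasis_gen]
  have hdim : pb.dim = 3 := by
    simp [hpb, Algebra.adjoin.powerBasis_dim, hmin]
  set b : Module.Basis (Fin 3) K L := pb.basis.reindex (finCongr hdim) with hbdef
  have hb : ∀ i : Fin 3, b i = r ^ (i:ℕ) := by
    intro i
    rw [hbdef, Module.Basis.reindex_apply, pb.basis_eq_pow, hgen']
    simp
  have hb0 : b 0 = 1 := by rw [hb 0]; norm_num
  have hb1 : b 1 = r := by rw [hb 1]; norm_num
  have hb2 : b 2 = r^2 := by rw [hb 2]; norm_num
  set x := b.repr a 0 with hx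
  set y := b.repr a 1 with hy
  set z := b.repr a 2 with hz
  have ha : a = x • (1:L) + y • r + z • (r^2) := by
    have h := b.sum_repr a
    rw [Fin.sum_univ_three, hb0, hb1, hb2] at h
    exact h.symm
  -- expansion facts
  have smul_def : ∀ (c : K) (w : L), c • w = algebraMap K L c * w :=
    fun c w => Algebra.smul_def c w
  have e0 : a * b 0 = x • b 0 + y • b 1 + z • b 2 := by
    rw [hb0, hb1, hb2, ha]
    simp only [smul_def]
    ring
  have e1 : a * b 1 = (5*z) • b 0 + x • b 1 + y • b 2 := by
    rw [hb0, hb1, hb2, ha]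
    simp only [smul_def, map_mul, map_ofNat, mul_one]
    linear_combination (algebraMap K L z) * hr
  have e2 : a * b 2 = (5*y) • b 0 + (5*z) • b 1 + x • b 2 := by
    rw [hb0, hb1, hb2, ha]
    simp only [smul_def, map_mul, map_ofNat, mul_one]
    linear_combination (algebraMap K L y + algebraMap K L z * r) * hr
  have hrepr : ∀ c0 c1 c2 : K, ∀ i : Fin 3,
      b.repr (c0 • b 0 + c1 • b 1 + c2 • b 2) i = ![c0, c1, c2] i := by
    intro c0 c1 c2 i
    have h := b.repr_sum_self ![c0, c1, c2]
    rw [Fin.sum_univ_three] at h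
    simp only [Matrix.cons_val_zero, Matrix.cons_val_one, Matrix.head_cons,
      Matrix.cons_val_two, Matrix.tail_cons] at h
    rw [h]
  have hcol0 : ∀ i, (b.repr (a * b 0)) i = ![x, y, z] i := by
    intro i; rw [e0]; exact hrepr x y z i
  have hcol1 : ∀ i, (b.repr (a * b 1)) i = ![5*z, x, y] i := by
    intro i; rw [e1]; exact hrepr (5*z) x y i
  have hcol2 : ∀ i, (b.repr (a * b 2)) i = ![5*y, 5*z, x] i := by
    intro i; rw [e2]; exact hrepr (5*y) (5*z) x i
  set N := Algebra.leftMulMatrix b a with hN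
  have E00 : N 0 0 = x := by rw [hN, Algebra.leftMulMatrix_eq_repr_mul]; simpa using hcol0 0
  have E10 : N 1 0 = y := by rw [hN, Algebra.leftMulMatrix_eq_repr_mul]; simpa using hcol0 1
  have E20 : N 2 0 = z := by rw [hN, Algebra.leftMulMatrix_eq_repr_mul]; simpa using hcol0 2
  have E01 : N 0 1 = 5*z := by rw [hN, Algebra.leftMulMatrix_eq_repr_mul]; simpa using hcol1 0
  have E11 : N 1 1 = x := by rw [hN, Algebra.leftMulMatrix_eq_repr_mul]; simpa using hcol1 1
  have E21 : N 2 1 = y := by rw [hN, Algebra.leftMulMatrix_eq_repr_mul]; simpa using hcol1 2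
  have E02 : N 0 2 = 5*y := by rw [hN, Algebra.leftMulMatrix_eq_repr_mul]; simpa using hcol2 0
  have E12 : N 1 2 = 5*z := by rw [hN, Algebra.leftMulMatrix_eq_repr_mul]; simpa using hcol2 1
  have E22 : N 2 2 = x := by rw [hN, Algebra.leftMulMatrix_eq_repr_mul]; simpa using hcol2 2
  have hnorm : Algebra.norm K a = x^3 + 5*y^3 + 25*z^3 - 15*(x*y*z) := by
    rw [Algebra.norm_eq_matrix_det b a, ← hN, Matrix.det_fin_three,
      E00, E10, E20, E01, E11, E21, E02, E12, E22]
    ring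
  rw [hna] at hnorm
  obtain ⟨φ⟩ := exists_emb K ε hε
  apply local19 (φ x) (φ y) (φ z)
  have h19 := congrArg φ hnorm.symm
  simpa only [map_add, map_sub, map_mul, map_pow, map_ofNat] using h19
end
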